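/- arXiv:1803.00872 — 3 statements merged into one kernel-verified Lean document; each statement's English description precedes it below -/
import Mathlib

section
/- Let p ∈ ℝ³ and θ ∈ (1,3). Then there exists a constant C > 0, depending only on θ, such that ∫_{ℝ³} 1/(((p-q)² + 1) |q|^θ) dq ≤ C / |p|^{θ-1} for all p ≠ 0. -/
open MeasureTheory

open Metric Set

local notation "E3" => EuclideanSpace ℝ (Fin 3)

lemma radial_integrable {g : ℝ → ℝ} (hm : Measurable g)
    (hg : IntegrableOn (fun r => r ^ 2 * g r) (Set.Ioi (0:ℝ))) :
    Integrable (fun x : E3 => g ‖x‖) := by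
  have h1 : Integrable (fun x : E3 => g ‖x‖) ↔
      IntegrableOn (fun x : E3 => g ‖x‖) ({(0:E3)}ᶜ) := by
    rw [IntegrableOn, restrict_compl_singleton]
  rw [h1, IntegrableOn, ← map_comap_subtype_coe (measurableSet_singleton (0:E3)).compl,
    (MeasurableEmbedding.subtype_coe (measurableSet_singleton (0:E3)).compl).integrable_map_iff]
  have h2 := (Measure.measurePreserving_homeomorphUnitSphereProd
    (volume : Measure E3)).integrable_comp_emb (Homeomorph.measurableEmbedding _)
    (g := fun x : sphere (0:E3) 1 × Ioi (0:ℝ) => g x.2.1)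
  have h3 : ((fun x : sphere (0:E3) 1 × Ioi (0:ℝ) => g x.2.1) ∘
      (homeomorphUnitSphereProd E3)) = fun x : ({(0:E3)}ᶜ : Set E3) => g ‖(x : E3)‖ := by
    ext x; simp
  rw [h3] at h2
  rw [show ((fun x : E3 => g ‖x‖) ∘ (Subtype.val : ({(0:E3)}ᶜ : Set E3) → E3))
      = fun x : ({(0:E3)}ᶜ : Set E3) => g ‖(x : E3)‖ from rfl, h2]
  -- now prove integrability on the product
  have hg' : Integrable (fun r : Ioi (0:ℝ) => g r.1) (Measure.volumeIoiPow 2) := by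
    rw [Measure.volumeIoiPow, integrable_withDensity_iff
      (by measurability) (Filter.Eventually.of_forall fun _ => ENNReal.ofReal_lt_top)]
    have : (fun r : Ioi (0:ℝ) => g r.1 * (ENNReal.ofReal (r.1 ^ 2)).toReal)
        = (fun r : ℝ => g r * r ^ 2) ∘ (Subtype.val : Ioi (0:ℝ) → ℝ) := by
      ext r
      simp [ENNReal.toReal_ofReal (sq_nonneg r.1)]
    rw [this, ← (MeasurableEmbedding.subtype_coe measurableSet_Ioi).integrable_map_iff,
      map_comap_subtype_coe measurableSet_Ioi]
    exact hg.congr_fun (fun r _ => mul_comm _ _) measurableSet_Ioi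
  have := (integrable_const (1:ℝ) (μ := (volume : Measure E3).toSphere)).smul_prod hg'
  simpa using this

lemma rpow_ball_integrable {s : ℝ} (hs : -3 < s) (R : ℝ) :
    Integrable (fun x : E3 => (ball (0:E3) R).indicator (fun x => ‖x‖ ^ s) x) := by
  have key : (fun x : E3 => (ball (0:E3) R).indicator (fun x => ‖x‖ ^ s) x)
      = fun x : E3 => (Iio R).indicator (fun r : ℝ => r ^ s) ‖x‖ := by
    ext x
    by_cases h : ‖x‖ < R
    · rw [indicator_of_mem (by simpa [mem_ball_zero_iff] using h),
        indicator_of_mem (by simpa using h)]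
    · rw [indicator_of_notMem (by simpa [mem_ball_zero_iff] using h),
        indicator_of_notMem (by simpa using h)]
  rw [key]
  apply radial_integrable
  · exact Measurable.indicator (by fun_prop) measurableSet_Iio
  · -- integrable on Ioi 0 of r^2 * indicator
    have h1 : IntegrableOn (fun r : ℝ => r ^ (s + 2)) (Ioo 0 R) := by
      rcases le_or_gt R 0 with h | h
      · rw [Ioo_eq_empty (not_lt.2 h)]
        exact integrableOn_empty
      · exact ((intervalIntegral.intervalIntegrable_rpow' (by linarith)).1.mono_set
          Ioo_subset_Ioc_self)
    have h2 : IntegrableOn (fun r : ℝ => r ^ 2 * (Iio R).indicator (fun r : ℝ => r ^ s) r)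
        (Ioo 0 R) := by
      apply h1.congr_fun _ measurableSet_Ioo
      intro r hr
      dsimp only
      rw [indicator_of_mem (by simpa using hr.2)]
      rw [Real.rpow_add hr.1, Real.rpow_two]
      ring
    have h3 : IntegrableOn (fun r : ℝ => r ^ 2 * (Iio R).indicator (fun r : ℝ => r ^ s) r)
        (Ioi 0 \ Ioo 0 R) := by
      apply (integrableOn_zero (μ := volume)).congr_fun _ (measurableSet_Ioi.diff measurableSet_Ioo)
      intro r hr
      have h4 : r ∉ Iio R := fun h => hr.2 ⟨hr.1, mem_Iio.1 h⟩
      dsimp only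
      rw [indicator_of_notMem h4, mul_zero]
    exact (h2.union h3).mono_set (fun r hr => by
      by_cases h : r ∈ Ioo 0 R
      · exact Or.inl h
      · exact Or.inr ⟨hr, h⟩)

lemma rpow_compl_integrable {s : ℝ} (hs : s < -3) {R : ℝ} (hR : 0 < R) :
    Integrable (fun x : E3 => ((ball (0:E3) R)ᶜ).indicator (fun x => ‖x‖ ^ s) x) := by
  have key : (fun x : E3 => ((ball (0:E3) R)ᶜ).indicator (fun x => ‖x‖ ^ s) x)
      = fun x : E3 => ((Iio R)ᶜ).indicator (fun r : ℝ => r ^ s) ‖x‖ := by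
    ext x
    by_cases h : ‖x‖ < R
    · rw [indicator_of_notMem (by simpa [mem_ball_zero_iff] using h),
        indicator_of_notMem (by simpa using h)]
    · rw [indicator_of_mem (by simpa [mem_ball_zero_iff] using h),
        indicator_of_mem (by simpa using h)]
  rw [key]
  apply radial_integrable
  · exact Measurable.indicator (by fun_prop) measurableSet_Iio.compl
  · have h1 : IntegrableOn (fun r : ℝ => r ^ (s + 2)) (Ici R) := by
      rw [IntegrableOn, Measure.restrict_congr_set Ioi_ae_eq_Ici.symm]
      exact integrableOn_Ioi_rpow_of_lt (by linarith) hR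
    have h2 : IntegrableOn (fun r : ℝ => r ^ 2 * ((Iio R)ᶜ).indicator (fun r : ℝ => r ^ s) r)
        (Ici R) := by
      apply h1.congr_fun _ measurableSet_Ici
      intro r hr
      dsimp only
      rw [indicator_of_mem (by simpa using hr)]
      rw [Real.rpow_add (lt_of_lt_of_le hR hr), Real.rpow_two]
      ring
    have h3 : IntegrableOn (fun r : ℝ => r ^ 2 * ((Iio R)ᶜ).indicator (fun r : ℝ => r ^ s) r)
        (Ioi 0 \ Ici R) := by
      apply (integrableOn_zero (μ := volume)).congr_fun _ (measurableSet_Ioi.diff measurableSet_Ici)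
      intro r hr
      have h4 : r ∈ Iio R := mem_Iio.2 (not_le.1 (fun h => hr.2 h))
      dsimp only
      rw [indicator_of_notMem (by simpa using h4), mul_zero]
    exact (h2.union h3).mono_set (fun r hr => by
      by_cases h : r ∈ Ici R
      · exact Or.inl h
      · exact Or.inr ⟨hr, h⟩)

lemma scale_integral (s a : ℝ) (ha : 0 < a) (t t' : Set E3)
    (hmem : ∀ q : E3, a⁻¹ • q ∈ t ↔ q ∈ t') :
    ∫ q : E3, t'.indicator (fun q => ‖q‖ ^ s) q
      = a ^ ((3:ℝ) + s) * ∫ q : E3, t.indicator (fun q => ‖q‖ ^ s) q := by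
  have key : ∀ q : E3, t'.indicator (fun q : E3 => ‖q‖ ^ s) q
      = a ^ s * (t.indicator (fun q : E3 => ‖q‖ ^ s) (a⁻¹ • q)) := by
    intro q
    by_cases hq : q ∈ t'
    · rw [indicator_of_mem hq, indicator_of_mem ((hmem q).2 hq), norm_smul]
      rw [norm_inv, Real.norm_eq_abs, abs_of_pos ha,
        Real.mul_rpow (inv_nonneg.2 ha.le) (norm_nonneg _),
        Real.inv_rpow ha.le, ← mul_assoc,
        mul_inv_cancel₀ (Real.rpow_pos_of_pos ha s).ne', one_mul]
    · rw [indicator_of_notMem hq, indicator_of_notMem (fun h => hq ((hmem q).1 h)), mul_zero]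
  calc ∫ q : E3, t'.indicator (fun q => ‖q‖ ^ s) q
      = ∫ q : E3, a ^ s * (t.indicator (fun q : E3 => ‖q‖ ^ s) (a⁻¹ • q)) := by
        simp_rw [key]
    _ = a ^ s * ∫ q : E3, t.indicator (fun q : E3 => ‖q‖ ^ s) (a⁻¹ • q) := by
        rw [integral_const_mul]
    _ = a ^ ((3:ℝ) + s) * ∫ q : E3, t.indicator (fun q => ‖q‖ ^ s) q := by
        rw [Measure.integral_comp_inv_smul_of_nonneg volume _ ha.le]
        simp only [finrank_euclideanSpace, Fintype.card_fin, smul_eq_mul]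
        rw [← mul_assoc]
        congr 1
        rw [← Real.rpow_natCast a 3, ← Real.rpow_add ha]
        ring_nf

lemma ae_ne_E3 (x : EuclideanSpace ℝ (Fin 3)) :
    ∀ᵐ q : EuclideanSpace ℝ (Fin 3) ∂volume, q ≠ x := by
  rw [ae_iff]
  simpa [not_not, Set.setOf_eq_eq_singleton] using measure_singleton x

set_option maxHeartbeats 2000000 in
/-- Three-dimensional parameter integral estimate (Lemma A.2, Eq. (A.2)):
for `θ ∈ (1,3)` there is `C > 0` with
`∫_{ℝ³} dq / ((|p-q|² + 1) |q|^θ) ≤ C / |p|^{θ-1}` for all `p ≠ 0`. -/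
theorem integral_three_dim_bound (θ : ℝ) (hθ : θ ∈ Set.Ioo (1 : ℝ) 3) :
    ∃ C > (0 : ℝ), ∀ p : EuclideanSpace ℝ (Fin 3), p ≠ 0 →
      (∫ q : EuclideanSpace ℝ (Fin 3), 1 / ((‖p - q‖ ^ 2 + 1) * ‖q‖ ^ θ))
        ≤ C / ‖p‖ ^ (θ - 1) := by
  obtain ⟨hθ1, hθ3⟩ := hθ
  set c₁ : ℝ := ∫ x : E3, (ball (0:E3) (1/2)).indicator (fun x => ‖x‖ ^ (-θ)) x with hc₁def
  set c₂ : ℝ := ∫ x : E3, (ball (0:E3) (1/2)).indicator (fun x => ‖x‖ ^ (-(2:ℝ))) x with hc₂def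
  set c₃ : ℝ := ∫ x : E3, ((ball (0:E3) (1/2))ᶜ).indicator (fun x => ‖x‖ ^ (-(2+θ))) x with hc₃def
  have hc₁ : 0 ≤ c₁ := integral_nonneg fun x =>
    indicator_nonneg (fun y _ => Real.rpow_nonneg (norm_nonneg y) _) x
  have hc₂ : 0 ≤ c₂ := integral_nonneg fun x =>
    indicator_nonneg (fun y _ => Real.rpow_nonneg (norm_nonneg y) _) x
  have hc₃ : 0 ≤ c₃ := integral_nonneg fun x =>
    indicator_nonneg (fun y _ => Real.rpow_nonneg (norm_nonneg y) _) x
  have h2θ : (0:ℝ) ≤ 2 ^ θ := Real.rpow_nonneg (by norm_num) θ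
  refine ⟨4 * c₁ + 2 ^ θ * c₂ + 16 * c₃ + 1, by nlinarith [mul_nonneg h2θ hc₂], ?_⟩
  intro p hp
  set C : ℝ := 4 * c₁ + 2 ^ θ * c₂ + 16 * c₃ + 1 with hCdef
  set a : ℝ := ‖p‖ with hadef
  have ha : 0 < a := norm_pos_iff.2 hp
  set G₁ : E3 → ℝ := fun q =>
    4 * a ^ (-(2:ℝ)) * (ball (0:E3) (a/2)).indicator (fun q => ‖q‖ ^ (-θ)) q with hG₁def
  set G₂ : E3 → ℝ := fun q =>
    2 ^ θ * a ^ (-θ) * (ball (0:E3) (a/2)).indicator (fun r => ‖r‖ ^ (-(2:ℝ))) (p - q) with hG₂def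
  set G₃ : E3 → ℝ := fun q =>
    16 * ((ball (0:E3) (a/2))ᶜ).indicator (fun q => ‖q‖ ^ (-(2+θ))) q with hG₃def
  have hI1 : Integrable G₁ := (rpow_ball_integrable (by linarith) (a/2)).const_mul _
  have hI2 : Integrable G₂ :=
    ((rpow_ball_integrable (by norm_num) (a/2)).comp_sub_left p).const_mul _
  have hI3 : Integrable G₃ := (rpow_compl_integrable (by linarith) (half_pos ha)).const_mul _
  have hG1nn : ∀ q, 0 ≤ G₁ q := fun q => mul_nonneg (by positivity)
    (indicator_nonneg (fun y _ => Real.rpow_nonneg (norm_nonneg y) _) q)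
  have hG2nn : ∀ q, 0 ≤ G₂ q := fun q => mul_nonneg (by positivity)
    (indicator_nonneg (fun y _ => Real.rpow_nonneg (norm_nonneg y) _) _)
  have hG3nn : ∀ q, 0 ≤ G₃ q := fun q => mul_nonneg (by positivity)
    (indicator_nonneg (fun y _ => Real.rpow_nonneg (norm_nonneg y) _) q)
  -- pointwise bound
  have hbound : ∀ q : E3, q ≠ 0 → q ≠ p →
      1 / ((‖p - q‖ ^ 2 + 1) * ‖q‖ ^ θ) ≤ G₁ q + G₂ q + G₃ q := by
    intro q hq0 hqp
    have hq : 0 < ‖q‖ := norm_pos_iff.2 hq0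
    have hpq : 0 < ‖p - q‖ := norm_pos_iff.2 (sub_ne_zero.2 fun h => hqp h.symm)
    have hT : 0 < ‖q‖ ^ θ := Real.rpow_pos_of_pos hq θ
    have hX : (0:ℝ) < ‖p - q‖ ^ 2 := by positivity
    by_cases h1 : ‖q‖ < a / 2
    · have e1 : G₁ q = 4 * a ^ (-(2:ℝ)) * ‖q‖ ^ (-θ) := by
        rw [hG₁def]
        simp only []
        rw [indicator_of_mem (mem_ball_zero_iff.2 h1)]
      have hd : a / 2 ≤ ‖p - q‖ := by
        have := norm_sub_norm_le p q
        rw [← hadef] at this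
        linarith [this]
      have hsq : (a/2) ^ 2 ≤ ‖p - q‖ ^ 2 := by nlinarith
      have key : 1 / ((‖p - q‖ ^ 2 + 1) * ‖q‖ ^ θ) ≤ 4 * a ^ (-(2:ℝ)) * ‖q‖ ^ (-θ) := by
        rw [Real.rpow_neg hq.le, Real.rpow_neg ha.le, Real.rpow_two, one_div, mul_inv]
        have h5 : (‖p - q‖ ^ 2 + 1)⁻¹ ≤ 4 * (a ^ 2)⁻¹ := by
          have h6 : a ^ 2 / 4 ≤ ‖p - q‖ ^ 2 + 1 := by nlinarith
          have h7 : (‖p - q‖ ^ 2 + 1)⁻¹ ≤ (a ^ 2 / 4)⁻¹ := by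
            apply inv_anti₀ (by positivity) h6
          have h8 : (a ^ 2 / 4)⁻¹ = 4 * (a ^ 2)⁻¹ := by field_simp
          linarith [h7, h8.le]
        calc (‖p - q‖ ^ 2 + 1)⁻¹ * (‖q‖ ^ θ)⁻¹
            ≤ 4 * (a ^ 2)⁻¹ * (‖q‖ ^ θ)⁻¹ :=
              mul_le_mul_of_nonneg_right h5 (by positivity)
          _ = 4 * (a ^ 2)⁻¹ * (‖q‖ ^ θ)⁻¹ := rfl
      rw [e1]
      linarith [key, hG2nn q, hG3nn q]
    · by_cases h2 : ‖p - q‖ < a / 2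
      · have e2 : G₂ q = 2 ^ θ * a ^ (-θ) * ‖p - q‖ ^ (-(2:ℝ)) := by
          rw [hG₂def]
          simp only []
          rw [indicator_of_mem (mem_ball_zero_iff.2 h2)]
        have hTa : (a/2) ^ θ ≤ ‖q‖ ^ θ :=
          Real.rpow_le_rpow (by positivity) (not_lt.1 h1) (by linarith)
        have key : 1 / ((‖p - q‖ ^ 2 + 1) * ‖q‖ ^ θ) ≤ 2 ^ θ * a ^ (-θ) * ‖p - q‖ ^ (-(2:ℝ)) := by
          rw [Real.rpow_neg hpq.le, Real.rpow_two, one_div, mul_inv]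
          have h5 : (‖p - q‖ ^ 2 + 1)⁻¹ ≤ (‖p - q‖ ^ 2)⁻¹ :=
            inv_anti₀ hX (by linarith)
          have h6 : (‖q‖ ^ θ)⁻¹ ≤ 2 ^ θ * a ^ (-θ) := by
            have h7 : (‖q‖ ^ θ)⁻¹ ≤ ((a/2) ^ θ)⁻¹ :=
              inv_anti₀ (Real.rpow_pos_of_pos (by positivity) θ) hTa
            have h8 : ((a/2) ^ θ)⁻¹ = 2 ^ θ * a ^ (-θ) := by
              rw [Real.div_rpow ha.le (by norm_num), Real.rpow_neg ha.le]
              field_simp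
            linarith [h7, h8.le]
          calc (‖p - q‖ ^ 2 + 1)⁻¹ * (‖q‖ ^ θ)⁻¹
              ≤ (‖p - q‖ ^ 2)⁻¹ * (2 ^ θ * a ^ (-θ)) := by
                apply mul_le_mul h5 h6 (by positivity) (by positivity)
            _ = 2 ^ θ * a ^ (-θ) * (‖p - q‖ ^ 2)⁻¹ := by ring
        rw [e2]
        linarith [key, hG1nn q, hG3nn q]
      · have e3 : G₃ q = 16 * ‖q‖ ^ (-(2+θ)) := by
          rw [hG₃def]
          simp only []
          rw [indicator_of_mem (by simpa [mem_ball_zero_iff] using h1)]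
        have hd : ‖q‖ / 4 ≤ ‖p - q‖ := by
          rcases le_or_gt ‖q‖ (2 * a) with h | h
          · linarith [not_lt.1 h2]
          · have h9 := norm_sub_norm_le q p
            rw [← norm_sub_rev p q, ← hadef] at h9
            linarith
        have hsq : ‖q‖ ^ 2 / 16 ≤ ‖p - q‖ ^ 2 := by nlinarith
        have key : 1 / ((‖p - q‖ ^ 2 + 1) * ‖q‖ ^ θ) ≤ 16 * ‖q‖ ^ (-(2+θ)) := by
          rw [Real.rpow_neg hq.le, Real.rpow_add hq, Real.rpow_two, one_div]
          have h5 : ‖q‖ ^ 2 / 16 * ‖q‖ ^ θ ≤ (‖p - q‖ ^ 2 + 1) * ‖q‖ ^ θ :=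
            mul_le_mul_of_nonneg_right (by linarith) hT.le
          have h6 : ((‖p - q‖ ^ 2 + 1) * ‖q‖ ^ θ)⁻¹ ≤ (‖q‖ ^ 2 / 16 * ‖q‖ ^ θ)⁻¹ :=
            inv_anti₀ (by positivity) h5
          have h7 : (‖q‖ ^ 2 / 16 * ‖q‖ ^ θ)⁻¹ = 16 * (‖q‖ ^ 2 * ‖q‖ ^ θ)⁻¹ := by
            field_simp
          linarith [h6, h7.le]
        rw [e3]
        linarith [key, hG1nn q, hG2nn q]
  -- a.e. bound
  have hae : ∀ᵐ q : E3 ∂volume,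
      1 / ((‖p - q‖ ^ 2 + 1) * ‖q‖ ^ θ) ≤ G₁ q + G₂ q + G₃ q := by
    filter_upwards [ae_ne_E3 0, ae_ne_E3 p] with q h h'
    exact hbound q h h'
  have step1 : (∫ q : E3, 1 / ((‖p - q‖ ^ 2 + 1) * ‖q‖ ^ θ))
      ≤ ∫ q : E3, (G₁ q + G₂ q + G₃ q) := by
    have hnn : ∀ q : E3, 0 ≤ 1 / ((‖p - q‖ ^ 2 + 1) * ‖q‖ ^ θ) := fun q =>
      div_nonneg zero_le_one (mul_nonneg (add_nonneg (sq_nonneg _) zero_le_one)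
        (Real.rpow_nonneg (norm_nonneg _) θ))
    exact integral_mono_of_nonneg (Filter.Eventually.of_forall hnn)
      ((hI1.add hI2).add hI3) hae
  have step2 : (∫ q : E3, (G₁ q + G₂ q + G₃ q))
      = (∫ q : E3, G₁ q) + (∫ q : E3, G₂ q) + ∫ q : E3, G₃ q := by
    have h12 : Integrable (fun q => G₁ q + G₂ q) := hI1.add hI2
    rw [integral_add h12 hI3, integral_add hI1 hI2]
  -- compute the three integrals
  have hmem1 : ∀ q : E3, a⁻¹ • q ∈ ball (0:E3) (1/2) ↔ q ∈ ball (0:E3) (a/2) := by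
    intro q
    simp only [mem_ball_zero_iff, norm_smul, norm_inv, Real.norm_eq_abs, abs_of_pos ha]
    rw [inv_mul_lt_iff₀ ha]
    constructor <;> intro h <;> linarith
  have int1 : (∫ q : E3, G₁ q) = 4 * c₁ * a ^ ((1:ℝ) - θ) := by
    rw [hG₁def]
    rw [integral_const_mul, scale_integral (-θ) a ha _ _ hmem1, ← hc₁def]
    have e1 : a ^ (-(2:ℝ)) * a ^ ((3:ℝ) + -θ) = a ^ ((1:ℝ) - θ) := by
      rw [← Real.rpow_add ha, show -(2:ℝ) + ((3:ℝ) + -θ) = 1 - θ by ring]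
    linear_combination (4 * c₁) * e1
  have int2 : (∫ q : E3, G₂ q) = 2 ^ θ * c₂ * a ^ ((1:ℝ) - θ) := by
    rw [hG₂def]
    rw [integral_const_mul]
    rw [show (∫ q : E3, (ball (0:E3) (a/2)).indicator (fun r => ‖r‖ ^ (-(2:ℝ))) (p - q))
        = ∫ q : E3, (ball (0:E3) (a/2)).indicator (fun r => ‖r‖ ^ (-(2:ℝ))) q from
      integral_sub_left_eq_self _ _ p]
    rw [scale_integral (-(2:ℝ)) a ha _ _ hmem1, ← hc₂def]
    have e2 : a ^ (-θ) * a ^ ((3:ℝ) + -(2:ℝ)) = a ^ ((1:ℝ) - θ) := by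
      rw [← Real.rpow_add ha, show -θ + ((3:ℝ) + -(2:ℝ)) = 1 - θ by ring]
    linear_combination ((2:ℝ) ^ θ * c₂) * e2
  have hmem3 : ∀ q : E3, a⁻¹ • q ∈ (ball (0:E3) (1/2))ᶜ ↔ q ∈ (ball (0:E3) (a/2))ᶜ := by
    intro q
    simp only [mem_compl_iff]
    exact not_congr (hmem1 q)
  have int3 : (∫ q : E3, G₃ q) = 16 * c₃ * a ^ ((1:ℝ) - θ) := by
    rw [hG₃def]
    rw [integral_const_mul, scale_integral (-(2+θ)) a ha _ _ hmem3, ← hc₃def]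
    have e3 : a ^ ((3:ℝ) + -((2:ℝ)+θ)) = a ^ ((1:ℝ) - θ) := by
      rw [show (3:ℝ) + -((2:ℝ)+θ) = 1 - θ by ring]
    linear_combination (16 * c₃) * e3
  have hpow : (0:ℝ) < a ^ ((1:ℝ) - θ) := Real.rpow_pos_of_pos ha _
  have hfin : C / a ^ (θ - 1) = C * a ^ ((1:ℝ) - θ) := by
    have h9 : a ^ (θ - 1) = (a ^ ((1:ℝ) - θ))⁻¹ := by
      rw [← Real.rpow_neg ha.le]
      congr 1
      ring
    rw [h9, div_eq_mul_inv, inv_inv]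
  rw [hfin]
  calc (∫ q : E3, 1 / ((‖p - q‖ ^ 2 + 1) * ‖q‖ ^ θ))
      ≤ (∫ q : E3, G₁ q) + (∫ q : E3, G₂ q) + ∫ q : E3, G₃ q := step1.trans step2.le
    _ = (4 * c₁ + 2 ^ θ * c₂ + 16 * c₃) * a ^ ((1:ℝ) - θ) := by
        rw [int1, int2, int3]; ring
    _ ≤ C * a ^ ((1:ℝ) - θ) := by
        apply mul_le_mul_of_nonneg_right _ hpow.le
        rw [hCdef]
        linarith
end

section
/- Let p ∈ ℝ² and θ ∈ {1,2}. Then there exists a constant C > 0 such that ∫_{ℝ²} 1/(((p-q)² + 1)(q² + 1)^{θ/2}) dq ≤ (C/|p|^θ)(log(1 + |p|) + 1) for all p ≠ 0. -/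
open MeasureTheory

local notation "E2" => EuclideanSpace ℝ (Fin 2)

open Set Metric in
lemma radial_eq (g : ℝ → ℝ) :
    ∫ q : E2, g ‖q‖ = 2 * (volume (ball (0:E2) 1)).toReal * ∫ r in Ioi (0:ℝ), r * g r := by
  have h := MeasureTheory.integral_fun_norm_addHaar (volume : Measure E2) g
  rw [finrank_euclideanSpace_fin] at h
  norm_num [smul_eq_mul] at h
  rw [h, measureReal_def]; ring

lemma contIntegrableOn {f : ℝ → ℝ} (hf : Continuous f) (a b : ℝ) :
    IntegrableOn f (Set.Ioo a b) :=
  ((hf.intervalIntegrable a b).1).mono_set Set.Ioo_subset_Ioc_self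

open Metric in
lemma contIntegrableOnBall {f : E2 → ℝ} (hf : Continuous f) (R : ℝ) :
    IntegrableOn f (ball (0:E2) R) :=
  (hf.continuousOn.integrableOn_compact (isCompact_closedBall _ _)).mono_set
    ball_subset_closedBall

lemma int_Ioo_inv_one_add {R : ℝ} (hR : 0 < R) :
    ∫ r in Set.Ioo (0:ℝ) R, (1+r)⁻¹ = Real.log (1+R) := by
  rw [← MeasureTheory.integral_Ioc_eq_integral_Ioo, ← intervalIntegral.integral_of_le hR.le]
  rw [intervalIntegral.integral_comp_add_left (a := 0) (b := R) (fun y : ℝ => y⁻¹) 1]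
  rw [integral_inv (by
    rw [Set.uIcc_of_le (by linarith)]
    intro h; exact absurd h.1 (by norm_num))]
  rw [add_zero, div_one]


set_option maxHeartbeats 4000000 in
/-- Two-dimensional parameter integral estimate (Lemma A.2, Eq. (A.3)):
for `θ ∈ {1,2}` there is `C > 0` with
`∫_{ℝ²} dq / ((|p-q|² + 1)(|q|² + 1)^{θ/2}) ≤ (C/|p|^θ)(log(1+|p|)+1)` for all `p ≠ 0`. -/
theorem integral_two_dim_bound (θ : ℝ) (hθ : θ ∈ ({1, 2} : Set ℝ)) :
    ∃ C > (0 : ℝ), ∀ p : EuclideanSpace ℝ (Fin 2), p ≠ 0 →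
      (∫ q : EuclideanSpace ℝ (Fin 2), 1 / ((‖p - q‖ ^ 2 + 1) * (‖q‖ ^ 2 + 1) ^ (θ / 2)))
        ≤ C / ‖p‖ ^ θ * (Real.log (1 + ‖p‖) + 1) := by
  have hθ' : θ = 1 ∨ θ = 2 := by simpa using hθ
  have hθ1 : 1 ≤ θ := by rcases hθ' with h | h <;> rw [h] <;> norm_num
  have hθ2 : θ ≤ 2 := by rcases hθ' with h | h <;> rw [h] <;> norm_num
  have hθ0 : 0 < θ := by linarith
  set V : ℝ := (volume (Metric.ball (0:E2) 1)).toReal with hVdef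
  have hV0 : 0 ≤ V := ENNReal.toReal_nonneg
  refine ⟨200 * (V + 1), by positivity, fun p hp => ?_⟩
  set n : ℝ := ‖p‖ with hndef
  have hn0 : 0 < n := norm_pos_iff.mpr hp
  set R : ℝ := n / 2 with hRdef
  have hR0 : 0 < R := by positivity
  set L : ℝ := Real.log (1 + n) with hLdef
  have hL0 : 0 ≤ L := Real.log_nonneg (by linarith)
  have hnθ : 0 < n ^ θ := Real.rpow_pos_of_pos hn0 θ
  have h2θ : (2:ℝ) ^ θ ≤ 4 := by
    have h := Real.rpow_le_rpow_of_exponent_le (x := 2) one_le_two hθ2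
    rwa [show ((2:ℝ) ^ (2:ℝ)) = 4 by
      rw [show (2:ℝ) = ((2:ℕ):ℝ) by norm_num, Real.rpow_natCast]; norm_num] at h
  have hRθpos : 0 < R ^ θ := Real.rpow_pos_of_pos hR0 θ
  have hRθ : n ^ θ / 4 ≤ R ^ θ := by
    rw [hRdef, Real.div_rpow hn0.le (by norm_num)]
    exact div_le_div_of_nonneg_left hnθ.le (by positivity) h2θ
  -- bounding functions
  set c1 : ℝ := 4 / n ^ 2 with hc1def
  set c2 : ℝ := 4 / n ^ θ with hc2def
  have hc10 : 0 ≤ c1 := by rw [hc1def]; positivity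
  have hc20 : 0 ≤ c2 := by rw [hc2def]; positivity
  set g1 : ℝ → ℝ := fun r => if r < R then c1 / (r ^ 2 + 1) ^ (θ/2) else 0 with hg1def
  set g2 : ℝ → ℝ := fun r => if r < R then c2 / (r ^ 2 + 1) else 0 with hg2def
  set g3 : ℝ → ℝ := fun r => if r ≤ 4*R then c2 / R ^ 2 else 0 with hg3def
  set g4 : ℝ → ℝ := fun r => if 4*R < r then 4 / r ^ ((2:ℝ)+θ) else 0 with hg4def
  clear_value V n R L c1 c2 g1 g2 g3 g4
  have hg1nn : ∀ r, 0 ≤ g1 r := by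
    intro r; rw [hg1def]; dsimp only; split_ifs with h
    · exact div_nonneg hc10 (Real.rpow_nonneg (by positivity) _)
    · exact le_refl 0
  have hg2nn : ∀ r, 0 ≤ g2 r := by
    intro r; rw [hg2def]; dsimp only; split_ifs with h
    · exact div_nonneg hc20 (by positivity)
    · exact le_refl 0
  have hg3nn : ∀ r, 0 ≤ g3 r := by
    intro r; rw [hg3def]; dsimp only; split_ifs with h
    · exact div_nonneg hc20 (by positivity)
    · exact le_refl 0
  have hg4nn : ∀ r, 0 ≤ g4 r := by
    intro r; rw [hg4def]; dsimp only; split_ifs with h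
    · exact div_nonneg (by norm_num) (Real.rpow_nonneg (le_of_lt (lt_trans (by positivity) h)) _)
    · exact le_refl 0
  -- pointwise domination
  have key : ∀ q : E2, 1 / ((‖p - q‖ ^ 2 + 1) * (‖q‖ ^ 2 + 1) ^ (θ / 2)) ≤
      g1 ‖q‖ + g2 ‖p - q‖ + g3 ‖q‖ + g4 ‖q‖ := by
    intro q
    set a := ‖p - q‖ with hadef
    set b := ‖q‖ with hbdef
    have ha0 : 0 ≤ a := norm_nonneg _
    have hb0 : 0 ≤ b := norm_nonneg _
    have hA0 : (0:ℝ) < a ^ 2 + 1 := by positivity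
    have hB0 : (0:ℝ) < b ^ 2 + 1 := by positivity
    set B : ℝ := (b ^ 2 + 1) ^ (θ/2) with hBdef
    have hBθ0 : (0:ℝ) < B := Real.rpow_pos_of_pos hB0 _
    clear_value a b B
    have htri : n ≤ a + b := by
      rw [hndef, hadef, hbdef]
      calc ‖p‖ = ‖(p - q) + q‖ := by rw [sub_add_cancel]
      _ ≤ ‖p - q‖ + ‖q‖ := norm_add_le _ _
    have htri2 : b - n ≤ a := by
      have h := norm_sub_norm_le q p
      rw [norm_sub_rev q p, ← hbdef, ← hndef, ← hadef] at h
      exact h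
    have hBbig : R ≤ b → n ^ θ / 4 ≤ B := by
      intro hbR
      refine le_trans hRθ ?_
      have h1 : R ^ θ = (R ^ 2) ^ (θ/2) := by
        rw [← Real.rpow_natCast R 2, ← Real.rpow_mul hR0.le]
        congr 1; push_cast; ring
      rw [h1, hBdef]
      exact Real.rpow_le_rpow (by positivity) (by nlinarith) (by positivity)
    by_cases h1 : b < R
    · have haR : R ≤ a := by
        rw [hRdef] at h1 ⊢; linarith
      have hkey : 1 / ((a ^ 2 + 1) * B) ≤ c1 / B := by
        rw [div_le_div_iff₀ (by positivity) hBθ0, hc1def, div_mul_eq_mul_div,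
          le_div_iff₀ (by positivity)]
        have h4 : n ^ 2 / 4 ≤ a ^ 2 + 1 := by nlinarith
        have h5 := mul_le_mul_of_nonneg_right h4 hBθ0.le
        nlinarith [h5]
      have hge : g1 b = c1 / B := by rw [hg1def]; dsimp only; rw [if_pos h1, hBdef]
      rw [hge]
      have := hg2nn a; have := hg3nn b; have := hg4nn b
      linarith [hkey]
    · push_neg at h1
      by_cases h2 : a < R
      · have hbR : R ≤ b := h1
        have hBb := hBbig hbR
        have hkey : 1 / ((a ^ 2 + 1) * B) ≤ c2 / (a ^ 2 + 1) := by
          rw [div_le_div_iff₀ (by positivity) hA0, hc2def, div_mul_eq_mul_div,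
            le_div_iff₀ hnθ]
          have h5 := mul_le_mul_of_nonneg_right hBb hA0.le
          nlinarith [h5]
        have hge : g2 a = c2 / (a ^ 2 + 1) := by rw [hg2def]; dsimp only; rw [if_pos h2]
        rw [hge]
        have := hg1nn b; have := hg3nn b; have := hg4nn b
        linarith [hkey]
      · push_neg at h2
        by_cases h3 : b ≤ 4*R
        · have hBb := hBbig h1
          have hkey : 1 / ((a ^ 2 + 1) * B) ≤ c2 / R ^ 2 := by
            rw [div_le_div_iff₀ (by positivity) (by positivity), hc2def, div_mul_eq_mul_div,
              le_div_iff₀ hnθ]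
            have hA : R ^ 2 ≤ a ^ 2 + 1 := by nlinarith
            have h5 := mul_le_mul hA hBb (by positivity) hA0.le
            nlinarith [h5]
          have hge : g3 b = c2 / R ^ 2 := by rw [hg3def]; dsimp only; rw [if_pos h3]
          rw [hge]
          have := hg1nn b; have := hg2nn a; have := hg4nn b
          linarith [hkey]
        · push_neg at h3
          have hb0' : (0:ℝ) < b := lt_trans (by positivity) h3
          have hab : b / 2 ≤ a := by
            rw [hRdef] at h3; linarith
          have hbθ : b ^ ((2:ℝ)+θ) = b ^ 2 * b ^ θ := by
            rw [Real.rpow_add hb0', ← Real.rpow_natCast b 2]; norm_num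
          have hBb : b ^ θ ≤ B := by
            have h1' : b ^ θ = (b ^ 2) ^ (θ/2) := by
              rw [← Real.rpow_natCast b 2, ← Real.rpow_mul hb0]
              congr 1; push_cast; ring
            rw [h1', hBdef]
            exact Real.rpow_le_rpow (by positivity) (by linarith) (by positivity)
          have hkey : 1 / ((a ^ 2 + 1) * B) ≤ 4 / b ^ ((2:ℝ)+θ) := by
            rw [div_le_div_iff₀ (by positivity) (Real.rpow_pos_of_pos hb0' _), hbθ]
            have hA : b ^ 2 / 4 ≤ a ^ 2 + 1 := by nlinarith
            have hbθ0 : (0:ℝ) ≤ b ^ θ := Real.rpow_nonneg hb0 _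
            have h5 := mul_le_mul hA hBb hbθ0 hA0.le
            nlinarith [h5]
          have hge : g4 b = 4 / b ^ ((2:ℝ)+θ) := by rw [hg4def]; dsimp only; rw [if_pos h3]
          rw [hge]
          have := hg1nn b; have := hg2nn a; have := hg3nn b
          linarith [hkey]
  -- continuity of base functions
  have hcont1 : Continuous fun q : E2 => c1 / (‖q‖ ^ 2 + 1) ^ (θ/2) := by
    refine continuous_const.div ?_ fun q => by positivity
    exact ((continuous_norm.pow 2).add continuous_const).rpow_const fun q => Or.inr (by linarith)
  have hcont2 : Continuous fun q : E2 => c2 / (‖q‖ ^ 2 + 1) := by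
    refine continuous_const.div ?_ fun q => by positivity
    exact (continuous_norm.pow 2).add continuous_const
  have hf1eq : (fun q : E2 => g1 ‖q‖)
      = (Metric.ball (0:E2) R).indicator (fun q => c1 / (‖q‖ ^ 2 + 1) ^ (θ/2)) := by
    funext q
    rw [hg1def]; dsimp only
    by_cases h : ‖q‖ < R
    · rw [if_pos h, Set.indicator_of_mem (mem_ball_zero_iff.mpr h)]
    · rw [if_neg h, Set.indicator_of_notMem (fun hc => h (mem_ball_zero_iff.mp hc))]
  have hI1 : Integrable (fun q : E2 => g1 ‖q‖) := by
    rw [hf1eq]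
    exact (contIntegrableOnBall hcont1 R).integrable_indicator measurableSet_ball
  have hf2eq : (fun q : E2 => g2 ‖q‖)
      = (Metric.ball (0:E2) R).indicator (fun q => c2 / (‖q‖ ^ 2 + 1)) := by
    funext q
    rw [hg2def]; dsimp only
    by_cases h : ‖q‖ < R
    · rw [if_pos h, Set.indicator_of_mem (mem_ball_zero_iff.mpr h)]
    · rw [if_neg h, Set.indicator_of_notMem (fun hc => h (mem_ball_zero_iff.mp hc))]
  have hI2' : Integrable (fun q : E2 => g2 ‖q‖) := by
    rw [hf2eq]
    exact (contIntegrableOnBall hcont2 R).integrable_indicator measurableSet_ball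
  have hI2 : Integrable (fun q : E2 => g2 ‖p - q‖) := hI2'.comp_sub_left p
  have hf3eq : (fun q : E2 => g3 ‖q‖)
      = (Metric.closedBall (0:E2) (4*R)).indicator (fun _ => c2 / R ^ 2) := by
    funext q
    rw [hg3def]; dsimp only
    by_cases h : ‖q‖ ≤ 4*R
    · rw [if_pos h, Set.indicator_of_mem (mem_closedBall_zero_iff.mpr h)]
    · rw [if_neg h, Set.indicator_of_notMem (fun hc => h (mem_closedBall_zero_iff.mp hc))]
  have hI3 : Integrable (fun q : E2 => g3 ‖q‖) := by
    rw [hf3eq]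
    exact (integrableOn_const measure_closedBall_lt_top.ne).integrable_indicator
      measurableSet_closedBall
  have hjap : Integrable (fun q : E2 => (1 + ‖q‖) ^ (-((2:ℝ)+θ))) := by
    apply integrable_one_add_norm
    rw [finrank_euclideanSpace_fin]
    push_cast; linarith
  have hmeas4 : Measurable (fun q : E2 => g4 ‖q‖) := by
    rw [hg4def]
    show Measurable fun q : E2 => if 4*R < ‖q‖ then 4 / ‖q‖ ^ ((2:ℝ)+θ) else 0
    refine Measurable.ite (measurableSet_lt measurable_const measurable_norm) ?_ measurable_const
    exact measurable_const.div ((Real.continuous_rpow_const (by linarith : (0:ℝ) ≤ 2+θ)).measurable.comp measurable_norm)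
  have hI4 : Integrable (fun q : E2 => g4 ‖q‖) := by
    set c4 : ℝ := 4 * ((1+4*R)/(4*R)) ^ ((2:ℝ)+θ) with hc4def
    have hc40 : 0 ≤ c4 := by rw [hc4def]; positivity
    clear_value c4
    refine (hjap.const_mul c4).mono hmeas4.aestronglyMeasurable ?_
    refine Filter.Eventually.of_forall fun q => ?_
    rw [hg4def]; dsimp only
    rw [Real.norm_eq_abs, Real.norm_eq_abs]
    split_ifs with h
    · have hq0 : (0:ℝ) < ‖q‖ := lt_trans (by positivity) h
      have hs0 : (0:ℝ) < (2:ℝ)+θ := by linarith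
      rw [abs_of_nonneg (div_nonneg (by norm_num) (Real.rpow_nonneg hq0.le _)),
        abs_of_nonneg (mul_nonneg hc40 (Real.rpow_nonneg (by positivity) _))]
      have hkey2 : (1 + ‖q‖) ≤ (1+4*R)/(4*R) * ‖q‖ := by
        rw [div_mul_eq_mul_div, le_div_iff₀ (by positivity)]
        nlinarith
      have h2 : (1+‖q‖) ^ ((2:ℝ)+θ) ≤ ((1+4*R)/(4*R)) ^ ((2:ℝ)+θ) * ‖q‖ ^ ((2:ℝ)+θ) := by
        rw [← Real.mul_rpow (by positivity) hq0.le]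
        exact Real.rpow_le_rpow (by positivity) hkey2 hs0.le
      rw [Real.rpow_neg (by positivity), ← div_eq_mul_inv,
        div_le_div_iff₀ (Real.rpow_pos_of_pos hq0 _) (Real.rpow_pos_of_pos (by positivity) _),
        hc4def]
      nlinarith [h2, Real.rpow_nonneg hq0.le ((2:ℝ)+θ)]
    · rw [abs_zero]
      exact abs_nonneg _
  have hI12 : Integrable (fun q : E2 => g1 ‖q‖ + g2 ‖p - q‖) := hI1.add hI2
  have hI123 : Integrable (fun q : E2 => g1 ‖q‖ + g2 ‖p - q‖ + g3 ‖q‖) := hI12.add hI3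
  have hF : Integrable (fun q : E2 => g1 ‖q‖ + g2 ‖p - q‖ + g3 ‖q‖ + g4 ‖q‖) :=
    hI123.add hI4
  have step1 : (∫ q : E2, 1 / ((‖p - q‖ ^ 2 + 1) * (‖q‖ ^ 2 + 1) ^ (θ / 2)))
      ≤ ∫ q : E2, (g1 ‖q‖ + g2 ‖p - q‖ + g3 ‖q‖ + g4 ‖q‖) :=
    integral_mono_of_nonneg (Filter.Eventually.of_forall fun q => by positivity) hF
      (Filter.Eventually.of_forall key)
  have hsplit : (∫ q : E2, (g1 ‖q‖ + g2 ‖p - q‖ + g3 ‖q‖ + g4 ‖q‖))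
      = (∫ q : E2, g1 ‖q‖) + (∫ q : E2, g2 ‖p - q‖) + (∫ q : E2, g3 ‖q‖)
        + (∫ q : E2, g4 ‖q‖) := by
    rw [integral_add hI123 hI4, integral_add hI12 hI3, integral_add hI1 hI2]
  have htrans : (∫ q : E2, g2 ‖p - q‖) = ∫ q : E2, g2 ‖q‖ :=
    integral_sub_left_eq_self (fun x : E2 => g2 ‖x‖) volume p
  -- radial integral bounds
  have hJ1ind : (fun r : ℝ => r * g1 r)
      = Set.indicator (Set.Iio R) (fun r => r * (c1 / (r ^ 2 + 1) ^ (θ/2))) := by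
    funext r
    rw [hg1def]; dsimp only
    by_cases h : r < R
    · rw [if_pos h, Set.indicator_of_mem (Set.mem_Iio.mpr h)]
    · rw [if_neg h, mul_zero, Set.indicator_of_notMem (fun hc => h (Set.mem_Iio.mp hc))]
  have hJ2ind : (fun r : ℝ => r * g2 r)
      = Set.indicator (Set.Iio R) (fun r => r * (c2 / (r ^ 2 + 1))) := by
    funext r
    rw [hg2def]; dsimp only
    by_cases h : r < R
    · rw [if_pos h, Set.indicator_of_mem (Set.mem_Iio.mpr h)]
    · rw [if_neg h, mul_zero, Set.indicator_of_notMem (fun hc => h (Set.mem_Iio.mp hc))]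
  have hJ3ind : (fun r : ℝ => r * g3 r)
      = Set.indicator (Set.Iic (4*R)) (fun r => r * (c2 / R ^ 2)) := by
    funext r
    rw [hg3def]; dsimp only
    by_cases h : r ≤ 4*R
    · rw [if_pos h, Set.indicator_of_mem (Set.mem_Iic.mpr h)]
    · rw [if_neg h, mul_zero, Set.indicator_of_notMem (fun hc => h (Set.mem_Iic.mp hc))]
  have hJ4ind : (fun r : ℝ => r * g4 r)
      = Set.indicator (Set.Ioi (4*R)) (fun r => 4 * r ^ (-(1+θ))) := by
    funext r
    rw [hg4def]; dsimp only
    by_cases h : 4*R < r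
    · rw [if_pos h, Set.indicator_of_mem (Set.mem_Ioi.mpr h)]
      have hr0 : (0:ℝ) < r := lt_trans (by positivity) h
      have hne : r ^ ((1:ℝ)+θ) ≠ 0 := (Real.rpow_pos_of_pos hr0 _).ne'
      rw [show (2:ℝ)+θ = 1+(1+θ) by ring, Real.rpow_add hr0, Real.rpow_one,
        Real.rpow_neg hr0.le]
      field_simp
    · rw [if_neg h, mul_zero, Set.indicator_of_notMem (fun hc => h (Set.mem_Ioi.mp hc))]
  have hlogR : Real.log (1+R) ≤ L := by
    rw [hLdef]
    apply Real.log_le_log (by linarith)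
    rw [hRdef]; linarith
  have hJ1 : (∫ r in Set.Ioi (0:ℝ), r * g1 r) ≤ 8 / n ^ θ * (L + 1) := by
    rw [hJ1ind, setIntegral_indicator measurableSet_Iio, Set.Ioi_inter_Iio]
    rcases hθ' with hone | htwo
    · rw [hone]
      have hb : ∀ r ∈ Set.Ioo (0:ℝ) R, r * (c1 / (r ^ 2 + 1) ^ ((1:ℝ)/2)) ≤ c1 := by
        intro r hr
        have hD0 : (0:ℝ) < (r ^ 2 + 1) ^ ((1:ℝ)/2) := Real.rpow_pos_of_pos (by positivity) _
        have hrD : r ≤ (r ^ 2 + 1) ^ ((1:ℝ)/2) := by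
          rw [← Real.sqrt_eq_rpow]
          calc r = Real.sqrt (r ^ 2) := by rw [Real.sqrt_sq hr.1.le]
          _ ≤ Real.sqrt (r ^ 2 + 1) := Real.sqrt_le_sqrt (by linarith)
        calc r * (c1 / (r ^ 2 + 1) ^ ((1:ℝ)/2)) = c1 * (r / (r ^ 2 + 1) ^ ((1:ℝ)/2)) := by ring
        _ ≤ c1 * 1 := mul_le_mul_of_nonneg_left (by rw [div_le_one hD0]; exact hrD) hc10
        _ = c1 := mul_one c1
      calc (∫ r in Set.Ioo (0:ℝ) R, r * (c1 / (r ^ 2 + 1) ^ ((1:ℝ)/2)))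
          ≤ ∫ _r in Set.Ioo (0:ℝ) R, c1 := by
            refine setIntegral_mono_on ?_ ?_ measurableSet_Ioo hb
            · refine contIntegrableOn ?_ 0 R
              exact continuous_id.mul (continuous_const.div
                (((continuous_pow 2).add continuous_const).rpow_const
                  fun r => Or.inr (by norm_num))
                fun r => (Real.rpow_pos_of_pos (by positivity) _).ne')
            · exact integrableOn_const (by
                rw [Real.volume_Ioo]; exact ENNReal.ofReal_ne_top)
        _ = R * c1 := by
            rw [setIntegral_const, Real.volume_real_Ioo, smul_eq_mul,
              max_eq_left (by linarith)]
            ring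
        _ ≤ 8 / n ^ (1:ℝ) * (L + 1) := by
            rw [hc1def, Real.rpow_one, hRdef]
            have he : n / 2 * (4 / n ^ 2) = 2 / n := by
              field_simp; ring
            rw [he]
            calc (2:ℝ) / n ≤ 8 / n := by gcongr <;> norm_num
            _ ≤ 8 / n * (L + 1) := le_mul_of_one_le_right (by positivity) (by linarith)
    · rw [htwo]
      simp only [show ((2:ℝ)/2) = 1 by norm_num, Real.rpow_one]
      have hb : ∀ r ∈ Set.Ioo (0:ℝ) R, r * (c1 / (r ^ 2 + 1)) ≤ c1 * (2 * (1+|r|)⁻¹) := by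
        intro r hr
        rw [abs_of_pos hr.1]
        have h1r : (0:ℝ) < 1 + r := by linarith [hr.1]
        have base : r / (r ^ 2 + 1) ≤ 2 * (1+r)⁻¹ := by
          rw [show (2:ℝ) * (1+r)⁻¹ = 2/(1+r) by rw [div_eq_mul_inv],
            div_le_div_iff₀ (by positivity) h1r]
          nlinarith [hr.1.le]
        calc r * (c1 / (r ^ 2 + 1)) = c1 * (r / (r ^ 2 + 1)) := by ring
        _ ≤ c1 * (2 * (1+r)⁻¹) := mul_le_mul_of_nonneg_left base hc10
      calc (∫ r in Set.Ioo (0:ℝ) R, r * (c1 / (r ^ 2 + 1)))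
          ≤ ∫ r in Set.Ioo (0:ℝ) R, c1 * (2 * (1+|r|)⁻¹) := by
            refine setIntegral_mono_on ?_ ?_ measurableSet_Ioo hb
            · refine contIntegrableOn ?_ 0 R
              exact continuous_id.mul (continuous_const.div
                ((continuous_pow 2).add continuous_const) fun r => by positivity)
            · refine contIntegrableOn ?_ 0 R
              exact continuous_const.mul (continuous_const.mul
                (((continuous_const.add continuous_abs).inv₀) fun r => (by positivity : (0:ℝ) < 1 + |r|).ne'))
        _ = 2 * c1 * Real.log (1+R) := by
            rw [setIntegral_congr_fun measurableSet_Ioo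
              (fun r hr => by rw [abs_of_pos hr.1] :
                ∀ r ∈ Set.Ioo (0:ℝ) R, c1 * (2 * (1+|r|)⁻¹) = c1 * (2 * (1+r)⁻¹))]
            rw [integral_const_mul, integral_const_mul, int_Ioo_inv_one_add hR0]
            ring
        _ ≤ 8 / n ^ (2:ℝ) * (L + 1) := by
            rw [hc1def]
            have hn2 : n ^ (2:ℝ) = n ^ 2 := by
              rw [show (2:ℝ) = ((2:ℕ):ℝ) by norm_num, Real.rpow_natCast]
            rw [hn2, show 2 * (4 / n ^ 2) * Real.log (1+R) = 8 / n ^ 2 * Real.log (1+R) by ring]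
            exact mul_le_mul_of_nonneg_left (by linarith) (by positivity)
  have hJ2 : (∫ r in Set.Ioi (0:ℝ), r * g2 r) ≤ 8 / n ^ θ * (L + 1) := by
    rw [hJ2ind, setIntegral_indicator measurableSet_Iio, Set.Ioi_inter_Iio]
    have hb : ∀ r ∈ Set.Ioo (0:ℝ) R, r * (c2 / (r ^ 2 + 1)) ≤ c2 * (2 * (1+|r|)⁻¹) := by
      intro r hr
      rw [abs_of_pos hr.1]
      have h1r : (0:ℝ) < 1 + r := by linarith [hr.1]
      have base : r / (r ^ 2 + 1) ≤ 2 * (1+r)⁻¹ := by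
        rw [show (2:ℝ) * (1+r)⁻¹ = 2/(1+r) by rw [div_eq_mul_inv],
          div_le_div_iff₀ (by positivity) h1r]
        nlinarith [hr.1.le]
      calc r * (c2 / (r ^ 2 + 1)) = c2 * (r / (r ^ 2 + 1)) := by ring
      _ ≤ c2 * (2 * (1+r)⁻¹) := mul_le_mul_of_nonneg_left base hc20
    calc (∫ r in Set.Ioo (0:ℝ) R, r * (c2 / (r ^ 2 + 1)))
        ≤ ∫ r in Set.Ioo (0:ℝ) R, c2 * (2 * (1+|r|)⁻¹) := by
          refine setIntegral_mono_on ?_ ?_ measurableSet_Ioo hb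
          · refine contIntegrableOn ?_ 0 R
            exact continuous_id.mul (continuous_const.div
              ((continuous_pow 2).add continuous_const) fun r => by positivity)
          · refine contIntegrableOn ?_ 0 R
            exact continuous_const.mul (continuous_const.mul
              (((continuous_const.add continuous_abs).inv₀) fun r => (by positivity : (0:ℝ) < 1 + |r|).ne'))
      _ = 2 * c2 * Real.log (1+R) := by
          rw [setIntegral_congr_fun measurableSet_Ioo
            (fun r hr => by rw [abs_of_pos hr.1] :
              ∀ r ∈ Set.Ioo (0:ℝ) R, c2 * (2 * (1+|r|)⁻¹) = c2 * (2 * (1+r)⁻¹))]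
          rw [integral_const_mul, integral_const_mul, int_Ioo_inv_one_add hR0]
          ring
      _ ≤ 8 / n ^ θ * (L + 1) := by
          rw [hc2def, show 2 * (4 / n ^ θ) * Real.log (1+R) = 8 / n ^ θ * Real.log (1+R) by ring]
          exact mul_le_mul_of_nonneg_left (by linarith) (by positivity)
  have hJ3 : (∫ r in Set.Ioi (0:ℝ), r * g3 r) ≤ 32 / n ^ θ * (L + 1) := by
    rw [hJ3ind, setIntegral_indicator measurableSet_Iic, Set.Ioi_inter_Iic]
    rw [integral_mul_const]
    have hid : (∫ r in Set.Ioc (0:ℝ) (4*R), r) = 8 * R ^ 2 := by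
      rw [← intervalIntegral.integral_of_le (by positivity : (0:ℝ) ≤ 4*R), integral_id]
      ring
    rw [hid, hc2def]
    have hR2 : (0:ℝ) < R ^ 2 := by positivity
    rw [show (8:ℝ) * R ^ 2 * (4 / n ^ θ / R ^ 2) = 32 / n ^ θ * (R ^ 2 / R ^ 2) by ring,
      div_self hR2.ne', mul_one]
    exact le_mul_of_one_le_right (by positivity) (by linarith)
  have hJ4 : (∫ r in Set.Ioi (0:ℝ), r * g4 r) ≤ 16 / n ^ θ * (L + 1) := by
    rw [hJ4ind, setIntegral_indicator measurableSet_Ioi, Set.Ioi_inter_Ioi,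
      max_eq_right (by positivity : (0:ℝ) ≤ 4*R)]
    rw [integral_const_mul]
    rw [integral_Ioi_rpow_of_lt (by linarith) (by positivity : (0:ℝ) < 4*R)]
    rw [show -(1+θ)+1 = -θ by ring, neg_div_neg_eq]
    have h1 : ((4*R):ℝ) ^ (-θ) ≤ R ^ (-θ) := by
      rw [Real.rpow_neg (by positivity), Real.rpow_neg hR0.le]
      exact inv_anti₀ hRθpos (Real.rpow_le_rpow hR0.le (by linarith) hθ0.le)
    have h2 : R ^ (-θ) ≤ 4 / n ^ θ := by
      rw [Real.rpow_neg hR0.le, show (4:ℝ)/n^θ = (n^θ/4)⁻¹ by rw [inv_div]]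
      exact inv_anti₀ (by positivity) hRθ
    have hstep : (4:ℝ) * ((4*R) ^ (-θ) / θ) ≤ 4 * ((4/n^θ)/1) := by
      refine mul_le_mul_of_nonneg_left ?_ (by norm_num)
      exact div_le_div₀ (by positivity) (h1.trans h2) one_pos hθ1
    refine le_trans hstep ?_
    rw [show (4:ℝ) * ((4/n^θ)/1) = 16 / n ^ θ by ring]
    exact le_mul_of_one_le_right (by positivity) (by linarith)
  -- final assembly
  refine le_trans step1 ?_
  rw [hsplit, htrans, radial_eq g1, radial_eq g2, radial_eq g3, radial_eq g4, ← hVdef]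
  have hVt : ∀ {x y : ℝ}, x ≤ y → 2*V*x ≤ 2*V*y :=
    fun h => mul_le_mul_of_nonneg_left h (by linarith)
  refine le_trans (add_le_add (add_le_add (add_le_add (hVt hJ1) (hVt hJ2)) (hVt hJ3))
    (hVt hJ4)) ?_
  have hM : 0 ≤ (L+1)/n^θ := by positivity
  have hco : (128:ℝ)*V ≤ 200*(V+1) := by linarith
  have hfin : 2*V*(8 / n ^ θ * (L + 1)) + 2*V*(8 / n ^ θ * (L + 1))
      + 2*V*(32 / n ^ θ * (L + 1)) + 2*V*(16 / n ^ θ * (L + 1))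
      = 128*V*((L+1)/n^θ) := by ring
  rw [hfin, show (200:ℝ)*(V+1)/n^θ*(L+1) = 200*(V+1)*((L+1)/n^θ) by ring]
  exact mul_le_mul_of_nonneg_right hco hM
end

section
/- Let d ≥ 1, α ≥ 0, and η be reals with 4(1-η) + 2α - d > 0 and 2α < d. Then there is a constant C > 0 such that for all p ∈ ℝ^d and all m ≥ 1, ∫_{ℝ^d} |q|^{-2α} / ((p - q)² + m)^{2(1-η)} dq ≤ C m^{-2(1-η) - α + d/2}. -/
open MeasureTheory
open Set

variable {E : Type*} [NormedAddCommGroup E] [NormedSpace ℝ E] [MeasurableSpace E]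
  [BorelSpace E] [FiniteDimensional ℝ E] [Nontrivial E]

lemma lintegral_fun_norm_polar (μ : Measure E) [μ.IsAddHaarMeasure] (f : ℝ → ENNReal)
    (hf : Measurable f) :
    ∫⁻ x, f ‖x‖ ∂μ = μ.toSphere univ *
      ∫⁻ y in Ioi (0:ℝ), ENNReal.ofReal (y ^ (Module.finrank ℝ E - 1)) * f y := by
  calc
    ∫⁻ x, f ‖x‖ ∂μ = ∫⁻ x : ({(0:E)}ᶜ : Set E), f ‖x.1‖ ∂(μ.comap (↑)) := by
      rw [lintegral_subtype_comap (measurableSet_singleton _).compl fun x ↦ f (‖x‖),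
        MeasureTheory.restrict_compl_singleton]
    _ = ∫⁻ z : Metric.sphere (0:E) 1 × Ioi (0:ℝ), f z.2
        ∂μ.toSphere.prod (.volumeIoiPow (Module.finrank ℝ E - 1)) :=
      by
        have h := μ.measurePreserving_homeomorphUnitSphereProd.lintegral_comp_emb
          ((homeomorphUnitSphereProd E).measurableEmbedding) (fun z => f z.2)
        simp only [homeomorphUnitSphereProd, homeomorphSphereProd_apply_snd_coe, div_one] at h
        exact h
    _ = μ.toSphere univ * ∫⁻ y : Ioi (0:ℝ), f y
        ∂(Measure.volumeIoiPow (Module.finrank ℝ E - 1)) := by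
      have h2 := lintegral_prod (μ := μ.toSphere)
        (ν := Measure.volumeIoiPow (Module.finrank ℝ E - 1)) (fun z => f z.2.1)
        ((hf.comp (measurable_subtype_coe.comp measurable_snd)).aemeasurable)
      rw [h2]
      simp [lintegral_const, mul_comm]
    _ = _ := by
      congr 1
      have h3 := lintegral_withDensity_eq_lintegral_mul (Measure.comap Subtype.val volume)
        (f := fun r : Ioi (0:ℝ) => ENNReal.ofReal (r.1 ^ (Module.finrank ℝ E - 1)))
        (by fun_prop) (g := fun y : Ioi (0:ℝ) => f y.1) (hf.comp measurable_subtype_coe)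
      rw [Measure.volumeIoiPow, h3]
      simp only [Pi.mul_apply]
      exact lintegral_subtype_comap measurableSet_Ioi
        (fun y : ℝ => ENNReal.ofReal (y ^ (Module.finrank ℝ E - 1)) * f y)

lemma oneD_integrable {n : ℕ} {s t : ℝ} (hs : 0 ≤ s) (ht : 0 ≤ t)
    (h1 : (-1:ℝ) < n - s) (h2 : (n:ℝ) - s - 2*t < -1) :
    IntegrableOn (fun y : ℝ => y ^ n * (y ^ (-s) / (1 + y^2) ^ t)) (Ioi 0) := by
  have hmeas : AEStronglyMeasurable (fun y : ℝ => y ^ n * (y ^ (-s) / (1 + y^2) ^ t))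
      (volume.restrict (Ioi (0:ℝ))) := by
    apply Measurable.aestronglyMeasurable
    fun_prop
  have hsplit : Ioi (0:ℝ) ⊆ Ioc 0 1 ∪ Ioi 1 := Ioi_subset_Ioc_union_Ioi
  refine IntegrableOn.mono_set ?_ hsplit
  refine IntegrableOn.union ?_ ?_
  · -- on (0,1]
    have hdom : IntegrableOn (fun y : ℝ => y ^ ((n:ℝ) - s)) (Ioc 0 1) :=
      (intervalIntegrable_iff_integrableOn_Ioc_of_le zero_le_one).mp
        (intervalIntegral.intervalIntegrable_rpow' h1)
    refine Integrable.mono' hdom (hmeas.mono_set (Ioc_subset_Ioi_self)) ?_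
    filter_upwards [ae_restrict_mem measurableSet_Ioc] with y hy
    have hy0 : 0 < y := hy.1
    have hb : (1:ℝ) ≤ (1 + y^2) ^ t := Real.one_le_rpow (by nlinarith) ht
    have hnn : 0 ≤ y ^ n * (y ^ (-s) / (1 + y^2) ^ t) := by positivity
    rw [Real.norm_of_nonneg hnn]
    calc y ^ n * (y ^ (-s) / (1 + y^2) ^ t) ≤ y ^ n * (y ^ (-s) / 1) := by
          apply mul_le_mul_of_nonneg_left _ (by positivity)
          exact div_le_div_of_nonneg_left (by positivity) one_pos hb
      _ = y ^ ((n:ℝ) - s) := by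
          rw [div_one, ← Real.rpow_natCast y n, ← Real.rpow_add hy0, sub_eq_add_neg]
  · -- on (1,∞)
    have hdom : IntegrableOn (fun y : ℝ => y ^ ((n:ℝ) - s - 2*t)) (Ioi 1) :=
      integrableOn_Ioi_rpow_of_lt h2 one_pos
    refine Integrable.mono' hdom (hmeas.mono_set (Ioi_subset_Ioi zero_le_one)) ?_
    filter_upwards [ae_restrict_mem measurableSet_Ioi] with y hy
    have hy1 : (1:ℝ) < y := hy
    have hy0 : 0 < y := lt_trans one_pos hy1
    have hb : y ^ (2*t) ≤ (1 + y^2) ^ t := by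
      have : (y:ℝ) ^ (2*t) = (y^2) ^ t := by
        rw [← Real.rpow_natCast y 2, ← Real.rpow_mul hy0.le]
        norm_num [mul_comm]
      rw [this]
      exact Real.rpow_le_rpow (by positivity) (by nlinarith) ht
    have hnn : 0 ≤ y ^ n * (y ^ (-s) / (1 + y^2) ^ t) := by positivity
    rw [Real.norm_of_nonneg hnn]
    calc y ^ n * (y ^ (-s) / (1 + y^2) ^ t) ≤ y ^ n * (y ^ (-s) / y ^ (2*t)) := by
          apply mul_le_mul_of_nonneg_left _ (by positivity)
          exact div_le_div_of_nonneg_left (by positivity) (by positivity) hb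
      _ = y ^ ((n:ℝ) - s - 2*t) := by
          rw [← Real.rpow_natCast y n, div_eq_mul_inv, ← Real.rpow_neg hy0.le,
            ← Real.rpow_add hy0, ← Real.rpow_add hy0]
          ring_nf

lemma integrable_g1 (μ : Measure E) [μ.IsAddHaarMeasure] {s t : ℝ} (hs : 0 ≤ s) (ht : 0 ≤ t)
    (h1 : s < Module.finrank ℝ E) (h2 : (Module.finrank ℝ E : ℝ) < s + 2*t) :
    Integrable (fun x : E => ‖x‖ ^ (-s) / (1 + ‖x‖^2) ^ t) μ := by
  have hrank : 1 ≤ Module.finrank ℝ E := Module.finrank_pos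
  have hcast : ((Module.finrank ℝ E - 1 : ℕ) : ℝ) = (Module.finrank ℝ E : ℝ) - 1 := by
    push_cast [hrank]; ring
  have hfm : Measurable (fun y : ℝ => ENNReal.ofReal (y ^ (-s) / (1 + y^2) ^ t)) := by
    fun_prop
  constructor
  · exact Measurable.aestronglyMeasurable (by fun_prop)
  · rw [HasFiniteIntegral,
      lintegral_enorm_of_nonneg (fun x : E =>
        div_nonneg (Real.rpow_nonneg (norm_nonneg x) _)
          (Real.rpow_nonneg (by positivity) _))]
    rw [lintegral_fun_norm_polar μ _ hfm]
    have hfin : (∫⁻ y in Ioi (0:ℝ), ENNReal.ofReal (y ^ (Module.finrank ℝ E - 1)) *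
        ENNReal.ofReal (y ^ (-s) / (1 + y^2) ^ t)) < ⊤ := by
      have hco : ∀ y ∈ Ioi (0:ℝ), ENNReal.ofReal (y ^ (Module.finrank ℝ E - 1)) *
          ENNReal.ofReal (y ^ (-s) / (1 + y^2) ^ t)
          = ENNReal.ofReal (y ^ (Module.finrank ℝ E - 1) * (y ^ (-s) / (1 + y^2) ^ t)) := by
        intro y hy
        rw [ENNReal.ofReal_mul (pow_nonneg (le_of_lt hy) _)]
      rw [setLIntegral_congr_fun measurableSet_Ioi hco]
      have hint : IntegrableOn
          (fun y : ℝ => y ^ (Module.finrank ℝ E - 1) * (y ^ (-s) / (1 + y^2) ^ t)) (Ioi 0) :=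
        oneD_integrable hs ht (by rw [hcast]; linarith) (by rw [hcast]; linarith)
      calc (∫⁻ y in Ioi (0:ℝ), ENNReal.ofReal
            (y ^ (Module.finrank ℝ E - 1) * (y ^ (-s) / (1 + y^2) ^ t)))
          ≤ ∫⁻ y in Ioi (0:ℝ),
            ‖y ^ (Module.finrank ℝ E - 1) * (y ^ (-s) / (1 + y^2) ^ t)‖ₑ :=
            lintegral_ofReal_le_lintegral_enorm _
        _ < ⊤ := hint.2
    exact ENNReal.mul_lt_top (measure_lt_top _ _) hfin


set_option maxHeartbeats 1000000 in

/-- Key integral bound (Eq. (G int bound)) of Proposition 3.1: for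
`4(1-η) + 2α - d > 0` and `2α < d`, there is `C > 0` with
`∫ |q|^{-2α}/((p-q)² + m)^{2(1-η)} dq ≤ C m^{-2(1-η) - α + d/2}`
for all `p ∈ ℝᵈ` and `m ≥ 1`. -/
theorem integral_G_bound (d : ℕ) (hd : 1 ≤ d) (α η : ℝ) (hα : 0 ≤ α)
    (hexp : 0 < 4 * (1 - η) + 2 * α - d) (hαd : 2 * α < d) :
    ∃ C > (0 : ℝ), ∀ p : EuclideanSpace ℝ (Fin d), ∀ m : ℝ, 1 ≤ m →
      (∫ q : EuclideanSpace ℝ (Fin d),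
          ‖q‖ ^ (-(2 * α)) / (‖p - q‖ ^ 2 + m) ^ (2 * (1 - η)))
        ≤ C * m ^ (-(2 * (1 - η)) - α + (d : ℝ) / 2) := by
  haveI : Nonempty (Fin d) := Fin.pos_iff_nonempty.mp hd
  set E := EuclideanSpace ℝ (Fin d)
  set t : ℝ := 2 * (1 - η) with ht_def
  have ht : 0 < t := by
    have h0 : (0:ℝ) < d - 2 * α := by linarith
    nlinarith
  have hfr : (Module.finrank ℝ E : ℝ) = d := by
    rw [finrank_euclideanSpace_fin]
  set g : E → ℝ := fun x => ‖x‖ ^ (-(2*α)) / (1 + ‖x‖^2) ^ t with hg_def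
  have hg_int : Integrable g volume := by
    apply integrable_g1 volume (by positivity) ht.le
    · rw [hfr]; linarith
    · rw [hfr]; linarith
  set I₁ : ℝ := ∫ x : E, g x with hI_def
  have hI₁ : 0 ≤ I₁ := integral_nonneg (fun x => by positivity)
  refine ⟨2 * I₁ + 1, by positivity, fun p m hm => ?_⟩
  have hm0 : (0:ℝ) < m := lt_of_lt_of_le one_pos hm
  set e : ℝ := -(2 * (1 - η)) - α + (d : ℝ) / 2 with he_def
  have hme : (0:ℝ) < m ^ e := Real.rpow_pos_of_pos hm0 _
  set B : E → ℝ := fun q => ‖q‖ ^ (-(2*α)) / (‖q‖^2 + m) ^ t with hB_def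
  have hBnonneg : ∀ q, 0 ≤ B q :=
    fun q => div_nonneg (Real.rpow_nonneg (norm_nonneg q) _)
      (Real.rpow_nonneg (by nlinarith [sq_nonneg ‖q‖]) _)
  have hsq : (0:ℝ) < Real.sqrt m := Real.sqrt_pos.mpr hm0
  have key : ∀ q : E, B (Real.sqrt m • q) = m ^ (-α - t) * g q := by
    intro q
    have hnorm : ‖Real.sqrt m • q‖ = Real.sqrt m * ‖q‖ := by
      rw [norm_smul, Real.norm_of_nonneg hsq.le]
    have h1 : ‖Real.sqrt m • q‖ ^ (-(2*α)) = m ^ (-α) * ‖q‖ ^ (-(2*α)) := by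
      rw [hnorm, Real.mul_rpow hsq.le (norm_nonneg q), Real.sqrt_eq_rpow,
        ← Real.rpow_mul hm0.le]
      ring_nf
    have h2 : (‖Real.sqrt m • q‖^2 + m) ^ t = m ^ t * (1 + ‖q‖^2) ^ t := by
      rw [hnorm, mul_pow, Real.sq_sqrt hm0.le,
        show m * ‖q‖^2 + m = m * (1 + ‖q‖^2) by ring,
        Real.mul_rpow hm0.le (by positivity)]
    show ‖Real.sqrt m • q‖ ^ (-(2*α)) / (‖Real.sqrt m • q‖^2 + m) ^ t
        = m ^ (-α - t) * (‖q‖ ^ (-(2*α)) / (1 + ‖q‖^2) ^ t)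
    rw [h1, h2, mul_div_mul_comm, Real.rpow_sub hm0]
  have hB_int : Integrable B volume := by
    rw [← integrable_comp_smul_iff volume B (ne_of_gt hsq)]
    have heq : (fun x : E => B (Real.sqrt m • x)) = fun x => m ^ (-α - t) * g x := by
      funext x; exact key x
    rw [heq]
    exact hg_int.const_mul _
  have hsd : (Real.sqrt m) ^ d = m ^ ((d:ℝ)/2) := by
    rw [Real.sqrt_eq_rpow, ← Real.rpow_natCast (m ^ ((1:ℝ)/2)) d, ← Real.rpow_mul hm0.le,
      show (1/2:ℝ) * d = (d:ℝ)/2 by ring]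
  have hBval : ∫ q, B q = m ^ e * I₁ := by
    have h := MeasureTheory.Measure.integral_comp_smul (volume : Measure E) B (Real.sqrt m)
    simp only [key] at h
    rw [integral_const_mul, finrank_euclideanSpace_fin, smul_eq_mul,
      abs_of_nonneg (inv_nonneg.mpr (pow_nonneg hsq.le d))] at h
    have hpow : (0:ℝ) < Real.sqrt m ^ d := pow_pos hsq d
    rw [← hI_def] at h
    have h2' : ∫ q, B q = Real.sqrt m ^ d * (m ^ (-α - t) * I₁) := by
      rw [h, ← mul_assoc, mul_inv_cancel₀ hpow.ne', one_mul]
    rw [h2', hsd, ← mul_assoc, ← Real.rpow_add hm0,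
      show (d:ℝ)/2 + (-α - t) = e by rw [he_def, ht_def]; ring]
  have hae : ∀ᵐ q : E ∂volume,
      ‖q‖ ^ (-(2 * α)) / (‖p - q‖ ^ 2 + m) ^ t ≤ B q + B (p - q) := by
    have hne : ∀ᵐ q : E ∂volume, q ≠ p := by
      rw [ae_iff]
      simp only [ne_eq, not_not, Set.setOf_eq_eq_singleton]
      exact measure_singleton p
    filter_upwards [hne] with q hq
    rcases le_total ‖q‖ ‖p - q‖ with h | h
    · have hc : (0:ℝ) < (‖q‖^2 + m) ^ t :=
        Real.rpow_pos_of_pos (by nlinarith [sq_nonneg ‖q‖]) _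
      have hb : (‖q‖^2 + m) ^ t ≤ (‖p-q‖^2 + m) ^ t :=
        Real.rpow_le_rpow (by nlinarith [sq_nonneg ‖q‖])
          (by nlinarith [norm_nonneg q, norm_nonneg (p-q)]) ht.le
      calc ‖q‖ ^ (-(2 * α)) / (‖p - q‖ ^ 2 + m) ^ t
          ≤ ‖q‖ ^ (-(2 * α)) / (‖q‖ ^ 2 + m) ^ t :=
            div_le_div_of_nonneg_left (Real.rpow_nonneg (norm_nonneg q) _) hc hb
        _ ≤ B q + B (p - q) := le_add_of_nonneg_right (hBnonneg _)
    · have hpq : (0:ℝ) < ‖p - q‖ := by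
        rw [norm_pos_iff]
        intro h0
        exact hq (sub_eq_zero.mp h0).symm
      have hnum : ‖q‖ ^ (-(2*α)) ≤ ‖p - q‖ ^ (-(2*α)) :=
        Real.rpow_le_rpow_of_nonpos hpq h (neg_nonpos.mpr (by positivity))
      have hden : (0:ℝ) < (‖p - q‖^2 + m) ^ t :=
        Real.rpow_pos_of_pos (by nlinarith [sq_nonneg ‖p - q‖]) _
      calc ‖q‖ ^ (-(2 * α)) / (‖p - q‖ ^ 2 + m) ^ t
          ≤ ‖p - q‖ ^ (-(2 * α)) / (‖p - q‖ ^ 2 + m) ^ t :=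
            (div_le_div_iff_of_pos_right hden).mpr hnum
        _ ≤ B q + B (p - q) := le_add_of_nonneg_left (hBnonneg _)
  calc (∫ q : E, ‖q‖ ^ (-(2 * α)) / (‖p - q‖ ^ 2 + m) ^ t)
      ≤ ∫ q : E, (B q + B (p - q)) :=
        integral_mono_of_nonneg
          (Filter.Eventually.of_forall (fun q =>
            div_nonneg (Real.rpow_nonneg (norm_nonneg q) _)
              (Real.rpow_nonneg (by nlinarith [sq_nonneg ‖p - q‖]) _)))
          (hB_int.add (hB_int.comp_sub_left p)) hae
    _ = (∫ q : E, B q) + ∫ q : E, B (p - q) :=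
        integral_add hB_int (hB_int.comp_sub_left p)
    _ = 2 * ∫ q : E, B q := by
        rw [integral_sub_left_eq_self B volume p]; ring
    _ = 2 * (m ^ e * I₁) := by rw [hBval]
    _ ≤ (2 * I₁ + 1) * m ^ e := by nlinarith
end
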